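/- Let T be a join tree of a hypergraph H with a subtree T_free containing exactly the free variables, and let the nodes of H containing a fixed vertex v_i all project (after removing vertices ordered after v_i) to a family V of sets each containing v_i. If the family V has no maximum element under inclusion, then there exist two vertices v_a, v_b appearing in sets of V that are not neighbors in H, and hence v_a, v_b, v_i form a pattern where v_i is a common neighbor of two non-neighbors. -/

import Mathlib

/-- Two vertices are neighbors in a hypergraph if some hyperedge contains both. -/
def Nbr {V : Type*} (E : Finset (Finset V)) (x y : V) : Prop :=
  ∃ e ∈ E, x ∈ e ∧ y ∈ e

/-- Join tree: a tree on the hyperedges with the running intersection property. -/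
def IsJoinTreeOf {V ι : Type*} (T : SimpleGraph ι) (lab : ι → Finset V)
    (E : Finset (Finset V)) : Prop :=
  T.IsTree ∧ (∀ i, lab i ∈ E) ∧ (∀ e ∈ E, ∃ i, lab i = e) ∧
    ∀ v : V, (T.induce {i | v ∈ lab i}).Preconnected

/-- A hypergraph is acyclic if it admits a join tree. -/
def HGAcyclic {V : Type*} (E : Finset (Finset V)) : Prop :=
  ∃ (ι : Type) (T : SimpleGraph ι) (lab : ι → Finset V), IsJoinTreeOf T lab E

namespace HellyAux

open SimpleGraph

variable {ι : Type*} {T : SimpleGraph ι}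

/-- A set is connected (in the walk sense) in `T`. -/
def Conn (T : SimpleGraph ι) (C : Set ι) : Prop :=
  ∀ x ∈ C, ∀ y ∈ C, ∃ w : T.Walk x y, ∀ z ∈ w.support, z ∈ C

/-- In a tree, every path between two vertices is contained in any walk between them. -/
lemma path_subset (hT : T.IsTree) {a b : ι} {p : T.Walk a b} (hp : p.IsPath)
    (w : T.Walk a b) : ∀ z ∈ p.support, z ∈ w.support := by
  classical
  have hu := hT.existsUnique_path a b
  have h1 : p = w.bypass := hu.unique hp (Walk.bypass_isPath w)
  intro z hz
  exact Walk.support_bypass_subset w (h1 ▸ hz)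

lemma conn_inter (hT : T.IsTree) {A B : Set ι} (hA : Conn T A) (hB : Conn T B) :
    Conn T (A ∩ B) := by
  classical
  rintro x ⟨hxA, hxB⟩ y ⟨hyA, hyB⟩
  obtain ⟨wa, hwa⟩ := hA x hxA y hyA
  obtain ⟨wb, hwb⟩ := hB x hxB y hyB
  refine ⟨wa.bypass, fun z hz => ?_⟩
  exact ⟨hwa z (Walk.support_bypass_subset wa hz),
    hwb z (path_subset hT (Walk.bypass_isPath wa) wb z hz)⟩

/-- First vertex on a walk belonging to a set containing the endpoint. -/
lemma first_hit {a b : ι} (p : T.Walk a b) (S : Set ι) (hb : b ∈ S) :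
    ∃ (m : ι) (q : T.Walk a m) (r : T.Walk m b),
      p = q.append r ∧ m ∈ S ∧ ∀ x ∈ q.support, x ∈ S → x = m := by
  induction p with
  | nil =>
    exact ⟨_, Walk.nil, Walk.nil, rfl, hb, by simp⟩
  | @cons u v c h p ih =>
    by_cases hu : u ∈ S
    · exact ⟨u, Walk.nil, Walk.cons h p, rfl, hu, by simp⟩
    · obtain ⟨m, q, r, heq, hm, hq⟩ := ih hb
      refine ⟨m, Walk.cons h q, r, by rw [Walk.cons_append, heq], hm, ?_⟩
      intro x hx hxS
      rw [Walk.support_cons, List.mem_cons] at hx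
      rcases hx with rfl | hx
      · exact absurd hxS hu
      · exact hq x hx hxS

/-- Helly property for three connected sets in a tree. -/
lemma helly3 (hT : T.IsTree) {A B C : Set ι} (hA : Conn T A) (hB : Conn T B) (hC : Conn T C)
    {a b c : ι} (haA : a ∈ A) (haB : a ∈ B) (hbA : b ∈ A) (hbC : b ∈ C)
    (hcB : c ∈ B) (hcC : c ∈ C) : ∃ m, m ∈ A ∧ m ∈ B ∧ m ∈ C := by
  classical
  obtain ⟨wab, hwab⟩ := hA a haA b hbA
  set pab := wab.bypass with hpabdef
  have hpab : pab.IsPath := Walk.bypass_isPath wab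
  have hsubA : ∀ z ∈ pab.support, z ∈ A := fun z hz =>
    hwab z (Walk.support_bypass_subset wab hz)
  obtain ⟨wbc, hwbc⟩ := hC b hbC c hcC
  set pbc := wbc.bypass with hpbcdef
  have hpbc : pbc.IsPath := Walk.bypass_isPath wbc
  have hsubC : ∀ z ∈ pbc.support, z ∈ C := fun z hz =>
    hwbc z (Walk.support_bypass_subset wbc hz)
  obtain ⟨m, q, r, heq, hm, hfirst⟩ :=
    first_hit pab {x | x ∈ pbc.support} (Walk.start_mem_support pbc)
  have hmC : m ∈ C := hsubC m hm
  have hmpab : m ∈ pab.support := by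
    rw [heq, Walk.mem_support_append_iff]
    exact Or.inl (Walk.end_mem_support q)
  have hmA : m ∈ A := hsubA m hmpab
  -- build the path from a to c through m
  have hq : q.IsPath := by
    have := heq ▸ hpab
    exact this.of_append_left
  set r2 := pbc.dropUntil m hm with hr2def
  have hr2 : r2.IsPath := hpbc.dropUntil hm
  have hr2sub : ∀ z ∈ r2.support, z ∈ pbc.support := fun z hz =>
    Walk.support_dropUntil_subset pbc hm hz
  set w := q.append r2 with hwdef
  have hwpath : w.IsPath := by
    rw [Walk.isPath_def, Walk.support_append]
    refine List.Nodup.append hq.support_nodup hr2.support_nodup.tail ?_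
    intro x hx hx'
    have hx2 : x ∈ r2.support := List.mem_of_mem_tail hx'
    have hxm : x = m := hfirst x hx (hr2sub x hx2)
    subst hxm
    have hnotail : x ∉ r2.support.tail := by
      have hnd := hr2.support_nodup
      rw [Walk.support_eq_cons r2] at hnd
      exact (List.nodup_cons.mp hnd).1
    exact hnotail hx'
  have hmw : m ∈ w.support := by
    rw [hwdef, Walk.mem_support_append_iff]
    exact Or.inl (Walk.end_mem_support q)
  obtain ⟨wac, hwac⟩ := hB a haB c hcB
  have hmB : m ∈ B := hwac m (path_subset hT hwpath wac m hmw)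
  exact ⟨m, hmA, hmB, hmC⟩

/-- Helly property for a finite family of connected sets in a tree. -/
lemma helly (hT : T.IsTree) :
    ∀ L : List (Set ι), (∀ A ∈ L, Conn T A) →
      (∀ A ∈ L, ∀ B ∈ L, (A ∩ B).Nonempty) → ∃ m, ∀ A ∈ L, m ∈ A
  | [], _, _ => by
    haveI : Nonempty ι := hT.isConnected.nonempty
    exact ⟨Classical.arbitrary ι, by simp⟩
  | [A], hc, hp => by
    obtain ⟨m, hm⟩ := hp A (by simp) A (by simp)
    exact ⟨m, by simpa using hm.1⟩
  | A :: B :: L, hc, hp => by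
    have hAB : Conn T (A ∩ B) :=
      conn_inter hT (hc A (by simp)) (hc B (by simp))
    have hA : A ∈ A :: B :: L := by simp
    have hB : B ∈ A :: B :: L := by simp
    have hint : ∀ X ∈ (A ∩ B) :: L, ∀ Y ∈ (A ∩ B) :: L, (X ∩ Y).Nonempty := by
      intro X hX Y hY
      have key : ∀ Z ∈ L, ((A ∩ B) ∩ Z).Nonempty := by
        intro Z hZ
        have hZ' : Z ∈ A :: B :: L := by simp [hZ]
        obtain ⟨a, haA, haB⟩ := hp A hA B hB
        obtain ⟨b, hbA, hbZ⟩ := hp A hA Z hZ'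
        obtain ⟨c, hcB, hcZ⟩ := hp B hB Z hZ'
        obtain ⟨m, hmA, hmB, hmZ⟩ := helly3 hT (hc A hA) (hc B hB) (hc Z hZ')
          haA haB hbA hbZ hcB hcZ
        exact ⟨m, ⟨hmA, hmB⟩, hmZ⟩
      rcases List.mem_cons.mp hX with rfl | hX <;>
        rcases List.mem_cons.mp hY with rfl | hY
      · obtain ⟨x, hx⟩ := hp A hA B hB
        exact ⟨x, hx, hx⟩
      · exact key Y hY
      · obtain ⟨x, hx1, hx2⟩ := key X hX
        exact ⟨x, hx2, hx1⟩
      · exact hp X (by simp [hX]) Y (by simp [hY])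
    have hcL : ∀ X ∈ (A ∩ B) :: L, Conn T X := by
      intro X hX
      rcases List.mem_cons.mp hX with rfl | hX
      · exact hAB
      · exact hc X (by simp [hX])
    obtain ⟨m, hm⟩ := helly hT ((A ∩ B) :: L) hcL hint
    have hmAB := hm (A ∩ B) (by simp)
    refine ⟨m, ?_⟩
    intro X hX
    rcases List.mem_cons.mp hX with rfl | hX
    · exact hmAB.1
    rcases List.mem_cons.mp hX with rfl | hX
    · exact hmAB.2
    · exact hm X (by simp [hX])
  termination_by L => L.length

end HellyAux

/-- Let `F` be an acyclic family of hyperedges all containing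
a common vertex `v_i`.  If `F` has no maximum element under inclusion, then
there exist two vertices `a`, `b` appearing in (hyperedges of) `F` that are not
neighbors, while `v_i` is a neighbor of both — the pattern of a common neighbor
of two non-neighbors. -/
theorem no_maximum_gives_nonneighbors {V : Type*}
    (F : Finset (Finset V)) (hacyc : HGAcyclic F)
    (vi : V) (hvi : ∀ e ∈ F, vi ∈ e)
    (hnomax : ¬ ∃ m ∈ F, ∀ s ∈ F, s ⊆ m) :
    ∃ a b : V, a ≠ b ∧ a ≠ vi ∧ b ≠ vi ∧
      (∃ e ∈ F, a ∈ e) ∧ (∃ e ∈ F, b ∈ e) ∧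
      ¬ Nbr F a b ∧ Nbr F a vi ∧ Nbr F b vi := by
  classical
  obtain ⟨ι, T, lab, hT, hlabF, hsurj, hconn⟩ := hacyc
  by_contra hcon
  -- every two occurring vertices (distinct from each other and from vi) are neighbors
  have key : ∀ a b : V, a ≠ b → a ≠ vi → b ≠ vi →
      (∃ e ∈ F, a ∈ e) → (∃ e ∈ F, b ∈ e) → Nbr F a b := by
    intro a b hab ha hb hea heb
    by_contra hnb
    obtain ⟨ea, hea1, hea2⟩ := hea
    obtain ⟨eb, heb1, heb2⟩ := heb
    exact hcon ⟨a, b, hab, ha, hb, ⟨ea, hea1, hea2⟩, ⟨eb, heb1, heb2⟩, hnb,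
      ⟨ea, hea1, hea2, hvi ea hea1⟩, ⟨eb, heb1, heb2, hvi eb heb1⟩⟩
  -- connectedness of the vertex subtrees
  have hConn : ∀ v : V, HellyAux.Conn T {i | v ∈ lab i} := by
    intro v x hx y hy
    obtain ⟨w⟩ := hconn v ⟨x, hx⟩ ⟨y, hy⟩
    refine ⟨w.map (SimpleGraph.Embedding.induce {i | v ∈ lab i}).toHom, ?_⟩
    intro z hz
    replace hz : z ∈ (w.map (SimpleGraph.Embedding.induce {i | v ∈ lab i}).toHom).support := hz
    rw [SimpleGraph.Walk.support_map] at hz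
    obtain ⟨⟨z', hz'⟩, _, rfl⟩ := List.mem_map.mp hz
    exact hz'
  -- the finite set of occurring vertices
  set S : Finset V := F.sup id with hSdef
  have hmemS : ∀ v, v ∈ S ↔ ∃ e ∈ F, v ∈ e := by
    intro v
    simp [hSdef, Finset.mem_sup]
  -- the list of subtrees
  set L : List (Set ι) := S.toList.map (fun v => {i | v ∈ lab i}) with hLdef
  have hcL : ∀ A ∈ L, HellyAux.Conn T A := by
    intro A hA
    obtain ⟨v, _, rfl⟩ := List.mem_map.mp hA
    exact hConn v
  have hint : ∀ A ∈ L, ∀ B ∈ L, (A ∩ B).Nonempty := by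
    intro A hA B hB
    obtain ⟨v, hv, rfl⟩ := List.mem_map.mp hA
    obtain ⟨w, hw, rfl⟩ := List.mem_map.mp hB
    have hv' : ∃ e ∈ F, v ∈ e := (hmemS v).mp (Finset.mem_toList.mp hv)
    have hw' : ∃ e ∈ F, w ∈ e := (hmemS w).mp (Finset.mem_toList.mp hw)
    -- find an edge containing both v and w
    have : ∃ e ∈ F, v ∈ e ∧ w ∈ e := by
      by_cases hvw : v = w
      · obtain ⟨e, he, hve⟩ := hv'
        exact ⟨e, he, hve, hvw ▸ hve⟩
      by_cases hvvi : v = vi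
      · obtain ⟨e, he, hwe⟩ := hw'
        exact ⟨e, he, hvvi ▸ hvi e he, hwe⟩
      by_cases hwvi : w = vi
      · obtain ⟨e, he, hve⟩ := hv'
        exact ⟨e, he, hve, hwvi ▸ hvi e he⟩
      · exact key v w hvw hvvi hwvi hv' hw'
    obtain ⟨e, he, hve, hwe⟩ := this
    obtain ⟨i, hi⟩ := hsurj e he
    exact ⟨i, by simp [hi, hve], by simp [hi, hwe]⟩
  obtain ⟨m, hm⟩ := HellyAux.helly hT L hcL hint
  refine hnomax ⟨lab m, hlabF m, ?_⟩
  intro s hs x hx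
  have hxS : x ∈ S := (hmemS x).mpr ⟨s, hs, hx⟩
  have : m ∈ {i | x ∈ lab i} :=
    hm _ (List.mem_map.mpr ⟨x, Finset.mem_toList.mpr hxS, rfl⟩)
  exact this
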